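/- Let (Ω, ℱ, P) be a probability space and G an integrable real random variable with P(0 < G < 1) = 1. Let 0 ≤ ε₁ < ε₂ ≤ 1 and let r₁, r₂ be real numbers with P(G > r₁) = ε₁ and P(G > r₂) = ε₂. Then E[G·𝟙{G > r₁}] < E[G·𝟙{G > r₂}]; that is, the upper-bound curve ε ↦ E[G·𝟙{G > q_{1−ε}}] is strictly increasing in ε. -/

import Mathlib

open MeasureTheory
open scoped ENNReal

/-- Strict monotonicity of the upper-bound curve: for `G` supported in `(0,1)` and
`0 ≤ ε₁ < ε₂ ≤ 1` with `P(G > r₁) = ε₁` and `P(G > r₂) = ε₂`,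
`E[G·𝟙{G > r₁}] < E[G·𝟙{G > r₂}]`. -/
theorem upper_bound_curve_strict_mono
    {Ω : Type*} [MeasurableSpace Ω] (P : Measure Ω) [IsProbabilityMeasure P]
    (G : Ω → ℝ) (hG : Integrable G P)
    (hG01 : P {ω | 0 < G ω ∧ G ω < 1} = 1)
    (ε₁ ε₂ : ℝ) (hε₁ : 0 ≤ ε₁) (hε : ε₁ < ε₂) (hε₂ : ε₂ ≤ 1)
    (r₁ r₂ : ℝ)
    (hr₁ : P {ω | G ω > r₁} = ENNReal.ofReal ε₁)
    (hr₂ : P {ω | G ω > r₂} = ENNReal.ofReal ε₂) :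
    (∫ ω, Set.indicator {ω | G ω > r₁} G ω ∂P) <
      ∫ ω, Set.indicator {ω | G ω > r₂} G ω ∂P := by
  classical
  set G' := hG.1.mk G with hG'def
  have hsm : StronglyMeasurable G' := hG.1.stronglyMeasurable_mk
  have hae : G =ᵐ[P] G' := hG.1.ae_eq_mk
  have hG' : Integrable G' P := hG.congr hae
  have hmeas : ∀ r : ℝ, MeasurableSet {ω | G' ω > r} := fun r =>
    hsm.measurable measurableSet_Ioi
  have hsetae : ∀ r : ℝ, {ω | G ω > r} =ᵐ[P] {ω | G' ω > r} := by
    intro r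
    filter_upwards [hae] with ω hω
    show (G ω > r) = (G' ω > r)
    rw [hω]
  have hμ₁ : P {ω | G' ω > r₁} = ENNReal.ofReal ε₁ :=
    (measure_congr (hsetae r₁)).symm.trans hr₁
  have hμ₂ : P {ω | G' ω > r₂} = ENNReal.ofReal ε₂ :=
    (measure_congr (hsetae r₂)).symm.trans hr₂
  -- a.e. bounds for G'
  have hN : P {ω | ¬ G ω = G' ω} = 0 := ae_iff.1 hae
  have hs'meas : MeasurableSet {ω | 0 < G' ω ∧ G' ω < 1} := by
    have h1 : MeasurableSet {ω | 0 < G' ω} := hsm.measurable measurableSet_Ioi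
    have h2 : MeasurableSet {ω | G' ω < 1} := hsm.measurable measurableSet_Iio
    exact h1.inter h2
  have h01' : ∀ᵐ ω ∂P, 0 < G' ω ∧ G' ω < 1 := by
    have hsub : {ω | 0 < G ω ∧ G ω < 1} ⊆
        {ω | 0 < G' ω ∧ G' ω < 1} ∪ {ω | ¬ G ω = G' ω} := by
      intro ω hω
      by_cases h : G ω = G' ω
      · left; exact ⟨h ▸ hω.1, h ▸ hω.2⟩
      · right; exact h
    have hle : (1 : ℝ≥0∞) ≤ P {ω | 0 < G' ω ∧ G' ω < 1} := by
      calc (1 : ℝ≥0∞) = P {ω | 0 < G ω ∧ G ω < 1} := hG01.symm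
        _ ≤ P ({ω | 0 < G' ω ∧ G' ω < 1} ∪ {ω | ¬ G ω = G' ω}) := measure_mono hsub
        _ ≤ P {ω | 0 < G' ω ∧ G' ω < 1} + P {ω | ¬ G ω = G' ω} := measure_union_le _ _
        _ = P {ω | 0 < G' ω ∧ G' ω < 1} := by rw [hN, add_zero]
    have h1 : P {ω | 0 < G' ω ∧ G' ω < 1} = 1 :=
      le_antisymm prob_le_one hle
    have := (prob_compl_eq_zero_iff hs'meas).2 h1
    rw [ae_iff]
    convert this using 2
    rfl
  have hGpos : ∀ᵐ ω ∂P, 0 < G' ω := h01'.mono fun ω h => h.1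
  -- r₂ ≤ r₁
  have hr : r₂ ≤ r₁ := by
    by_contra h
    push_neg at h
    have hsub : {ω | G' ω > r₂} ⊆ {ω | G' ω > r₁} := fun ω hω => lt_trans h hω
    have hle := measure_mono (μ := P) hsub
    rw [hμ₂, hμ₁] at hle
    have := (ENNReal.ofReal_le_ofReal_iff hε₁).1 hle
    linarith
  set A : Set Ω := {ω | G' ω > r₁} with hA
  set B : Set Ω := {ω | G' ω > r₂} with hB
  have hAB : A ⊆ B := fun ω hω => lt_of_le_of_lt hr hω
  have hμdiff : P (B \ A) = ENNReal.ofReal (ε₂ - ε₁) := by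
    rw [measure_diff (μ := P) hAB (hmeas r₁).nullMeasurableSet (measure_ne_top P A),
      hμ₁, hμ₂, ← ENNReal.ofReal_sub _ hε₁]
  have hμdiffpos : 0 < P (B \ A) := by
    rw [hμdiff]
    exact ENNReal.ofReal_pos.2 (by linarith)
  -- positivity of integral over the difference set
  have hpos : 0 < ∫ ω in B \ A, G' ω ∂P := by
    have hint : IntegrableOn G' (B \ A) P := hG'.integrableOn
    have hnn : 0 ≤ᵐ[P.restrict (B \ A)] G' :=
      ae_restrict_of_ae (hGpos.mono fun ω h => le_of_lt h)
    rw [setIntegral_pos_iff_support_of_nonneg_ae hnn hint]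
    have hsub2 : (B \ A) \ Function.support G' ⊆ {ω | ¬ (0 < G' ω)} := by
      intro ω hω
      have : G' ω = 0 := Function.notMem_support.1 hω.2
      simp [this]
    have hnull2 : P {ω | ¬ (0 < G' ω)} = 0 := ae_iff.1 hGpos
    have hnull3 : P ((B \ A) \ Function.support G') = 0 :=
      measure_mono_null hsub2 hnull2
    have hle2 : P (B \ A) ≤ P (Function.support G' ∩ (B \ A)) := by
      calc P (B \ A)
          ≤ P ((Function.support G' ∩ (B \ A)) ∪ ((B \ A) \ Function.support G')) := by
            apply measure_mono
            intro ω hω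
            by_cases h : ω ∈ Function.support G'
            · exact Or.inl ⟨h, hω⟩
            · exact Or.inr ⟨hω, h⟩
        _ ≤ P (Function.support G' ∩ (B \ A)) + P ((B \ A) \ Function.support G') :=
            measure_union_le _ _
        _ = P (Function.support G' ∩ (B \ A)) := by rw [hnull3, add_zero]
    exact lt_of_lt_of_le hμdiffpos hle2
  -- rewrite both sides of the goal
  have hlhs : (∫ ω, Set.indicator {ω | G ω > r₁} G ω ∂P) = ∫ ω in A, G' ω ∂P := by
    rw [← integral_indicator (hmeas r₁)]
    apply integral_congr_ae
    filter_upwards [hae] with ω hω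
    simp only [Set.indicator_apply, Set.mem_setOf_eq, hω]
  have hrhs : (∫ ω, Set.indicator {ω | G ω > r₂} G ω ∂P) = ∫ ω in B, G' ω ∂P := by
    rw [← integral_indicator (hmeas r₂)]
    apply integral_congr_ae
    filter_upwards [hae] with ω hω
    simp only [Set.indicator_apply, Set.mem_setOf_eq, hω]
  rw [hlhs, hrhs]
  have hsplit : (∫ ω in B, G' ω ∂P) = (∫ ω in A, G' ω ∂P) + ∫ ω in B \ A, G' ω ∂P := by
    rw [← setIntegral_union disjoint_sdiff_self_right ((hmeas r₂).diff (hmeas r₁))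
      hG'.integrableOn hG'.integrableOn, Set.union_diff_cancel hAB]
  rw [hsplit]
  linarith
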